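/- arXiv:1711.07575 — 4 statements merged into one kernel-verified Lean document; each statement's English description precedes it below -/
import Mathlib

section
/- Let Y₁,…,Y_d be i.i.d. standard Gaussian random variables and let a₁,…,a_d be real numbers, not all zero. Set Z = ∑_{i=1}^d a_i(Y_i² − 1), ‖a‖₂ = (∑_{i=1}^d a_i²)^{1/2} and ‖a‖_∞ = max_{1≤i≤d}|a_i|. Then for every real x with 2‖a‖_∞|x| < 1, log E[exp(xZ)] ≤ ‖a‖₂² x² / (1 − 2‖a‖_∞|x|). -/
open MeasureTheory ProbabilityTheory
open scoped ENNReal NNReal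

lemma aux_log_bound {c t : ℝ} (hc1 : c < 1) (ht : |2 * t| ≤ c) :
    -t - Real.log (1 - 2 * t) / 2 ≤ t ^ 2 / (1 - c) := by
  have hc0 : 0 ≤ c := le_trans (abs_nonneg _) ht
  have h1c : 0 < 1 - c := by linarith
  set K : ℝ := (2 * (1 - c))⁻¹ with hK
  have hKpos : 0 < K := by positivity
  have hK2 : K * (2 * (1 - c)) = 1 := inv_mul_cancel₀ (by positivity)
  set g : ℝ → ℝ := fun u => u ^ 2 * K + u + Real.log (1 - u) with hg
  have hderiv : ∀ u : ℝ, u < 1 → HasDerivAt g (2 * u * K + 1 - (1 - u)⁻¹) u := by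
    intro u hu
    have h1u : (1 : ℝ) - u ≠ 0 := by intro h; linarith [h]
    have h1 : HasDerivAt (fun u : ℝ => 1 - u) (-1) u := (hasDerivAt_id u).const_sub 1
    have hlog : HasDerivAt (fun u : ℝ => Real.log (1 - u)) (-(1 - u)⁻¹) u := by
      have := (Real.hasDerivAt_log h1u).comp u h1
      simpa [Function.comp_def] using this
    have hp : HasDerivAt (fun u : ℝ => u ^ 2 * K + u) (2 * u * K + 1) u := by
      have := ((hasDerivAt_pow 2 u).mul_const K).add (hasDerivAt_id u)
      simpa [Pi.add_def] using this
    have h := hp.add hlog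
    rw [show 2 * u * K + 1 - (1 - u)⁻¹ = 2 * u * K + 1 + -(1 - u)⁻¹ from by ring]
    exact h
  have hbound : |2 * t| ≤ c := ht
  have hs1 : 2 * t ≤ c := le_trans (le_abs_self _) ht
  have hs2 : -c ≤ 2 * t := neg_le_of_abs_le ht
  have h0g : 0 ≤ g (2 * t) := by
    rcases le_or_gt 0 (2 * t) with hpos | hneg
    · -- monotone on [0, c]
      have hmono : MonotoneOn g (Set.Icc 0 c) := by
        apply monotoneOn_of_deriv_nonneg (convex_Icc 0 c)
        · intro u hu
          exact (hderiv u (lt_of_le_of_lt hu.2 hc1)).continuousAt.continuousWithinAt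
        · rw [interior_Icc]
          intro u hu
          exact (hderiv u (lt_trans hu.2 hc1)).differentiableAt.differentiableWithinAt
        · rw [interior_Icc]
          intro u hu
          rw [(hderiv u (lt_trans hu.2 hc1)).deriv]
          have hu0 : 0 < u := hu.1
          have h1u : 0 < 1 - u := by linarith [lt_trans hu.2 hc1]
          have he : (1 - u)⁻¹ * (1 - u) = 1 := inv_mul_cancel₀ h1u.ne'
          have hepos : 0 < (1 - u)⁻¹ := inv_pos.2 h1u
          have hle : (1 - u)⁻¹ ≤ (1 - c)⁻¹ := by
            apply inv_anti₀ h1c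
            linarith [hu.2]
          have h2K : (1 - c)⁻¹ = 2 * K := by
            rw [hK]
            rw [mul_inv]
            ring
          nlinarith [mul_le_mul_of_nonneg_left hle hu0.le, he]
      have h0mem : (0 : ℝ) ∈ Set.Icc (0 : ℝ) c := ⟨le_refl _, hc0⟩
      have hsmem : 2 * t ∈ Set.Icc (0 : ℝ) c := ⟨hpos, hs1⟩
      have := hmono h0mem hsmem hpos
      simpa [hg] using this
    · -- antitone on [-c, 0]
      have hanti : AntitoneOn g (Set.Icc (-c) 0) := by
        apply antitoneOn_of_deriv_nonpos (convex_Icc (-c) 0)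
        · intro u hu
          exact (hderiv u (lt_of_le_of_lt hu.2 one_pos)).continuousAt.continuousWithinAt
        · rw [interior_Icc]
          intro u hu
          exact (hderiv u (lt_trans hu.2 one_pos)).differentiableAt.differentiableWithinAt
        · rw [interior_Icc]
          intro u hu
          rw [(hderiv u (lt_trans hu.2 one_pos)).deriv]
          have hu0 : u < 0 := hu.2
          have h1u : 0 < 1 - u := by linarith
          have he : (1 - u)⁻¹ * (1 - u) = 1 := inv_mul_cancel₀ h1u.ne'
          have hepos : 0 < (1 - u)⁻¹ := inv_pos.2 h1u
          have hele1 : (1 - u)⁻¹ ≤ 1 := by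
            have := inv_anti₀ one_pos (show (1:ℝ) ≤ 1 - u by linarith)
            simpa using this
          have h2K : 1 ≤ 2 * K := by
            nlinarith [hK2]
          nlinarith [mul_le_mul_of_nonneg_left (hele1.trans h2K) (neg_nonneg.2 hu0.le), he]
      have h0mem : (0 : ℝ) ∈ Set.Icc (-c) (0 : ℝ) := ⟨neg_nonpos.2 hc0, le_refl _⟩
      have hsmem : 2 * t ∈ Set.Icc (-c) (0 : ℝ) := ⟨hs2, hneg.le⟩
      have := hanti hsmem h0mem hneg.le
      simpa [hg] using this
  have hexp : g (2 * t) = 4 * t ^ 2 * K + 2 * t + Real.log (1 - 2 * t) := by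
    simp only [hg]; ring_nf
  have hinv : (1 - c)⁻¹ = 2 * K := by
    rw [hK, mul_inv]; ring
  rw [show t ^ 2 / (1 - c) = t ^ 2 * (1 - c)⁻¹ from div_eq_mul_inv _ _, hinv]
  rw [hexp] at h0g
  linarith

lemma gaussian_sq_mgf {t : ℝ} (ht : t < 1 / 2) :
    ∫ y, Real.exp (t * y ^ 2) ∂(gaussianReal 0 1) = (Real.sqrt (1 - 2 * t))⁻¹ := by
  have hb : 0 < 1 / 2 - t := by linarith
  rw [gaussianReal_of_var_ne_zero 0 one_ne_zero, gaussianPDF_def]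
  have hmeas : Measurable fun y => (gaussianPDFReal 0 1 y).toNNReal :=
    (measurable_gaussianPDFReal 0 1).real_toNNReal
  have heq : (fun x => ENNReal.ofReal (gaussianPDFReal 0 1 x))
      = fun x => ((gaussianPDFReal 0 1 x).toNNReal : ℝ≥0∞) := rfl
  rw [heq, integral_withDensity_eq_integral_smul hmeas]
  simp_rw [NNReal.smul_def, Real.coe_toNNReal _ (gaussianPDFReal_nonneg 0 1 _)]
  have hrw : ∀ y : ℝ, gaussianPDFReal 0 1 y * Real.exp (t * y ^ 2)
      = (Real.sqrt (2 * Real.pi))⁻¹ * Real.exp (-(1 / 2 - t) * y ^ 2) := by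
    intro y
    rw [gaussianPDFReal]
    push_cast
    rw [mul_one, mul_one, sub_zero, mul_assoc, ← Real.exp_add]
    congr 2
    ring
  simp_rw [smul_eq_mul, hrw]
  rw [integral_const_mul, integral_gaussian]
  have h2 : Real.pi / (1 / 2 - t) = (2 * Real.pi) * (1 - 2 * t)⁻¹ := by
    field_simp
  rw [h2, Real.sqrt_mul (x := 2 * Real.pi) (by positivity) ((1 - 2 * t)⁻¹),
    Real.sqrt_inv, ← mul_assoc,
    inv_mul_cancel₀ (ne_of_gt (Real.sqrt_pos.2 (by positivity))), one_mul]

/-- Log-MGF bound for `Z = ∑ i, a i * (Y i ^ 2 - 1)` with `Y i` i.i.d.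
standard Gaussian and `a ≠ 0`: for every `x` with `2‖a‖∞|x| < 1`,
`log E[exp (x Z)] ≤ ‖a‖₂² x² / (1 - 2‖a‖∞|x|)`. -/
theorem gaussian_quadratic_logMgf_bound
    {Ω : Type*} [MeasurableSpace Ω] (μ : Measure Ω) [IsProbabilityMeasure μ]
    {d : ℕ} (Y : Fin d → Ω → ℝ) (hmeas : ∀ i, Measurable (Y i))
    (hindep : iIndepFun Y μ)
    (hdist : ∀ i, μ.map (Y i) = gaussianReal 0 1)
    (a : Fin d → ℝ) (ha : a ≠ 0)
    (x : ℝ) (hx : 2 * (⨆ i, |a i|) * |x| < 1) :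
    Real.log (∫ ω, Real.exp (x * ∑ i, a i * ((Y i ω) ^ 2 - 1)) ∂μ)
      ≤ (∑ i, (a i) ^ 2) * x ^ 2 / (1 - 2 * (⨆ i, |a i|) * |x|) := by
  classical
  obtain ⟨i₀, hi₀⟩ := Function.ne_iff.mp ha
  set M := ⨆ i, |a i| with hM
  have hMle : ∀ i, |a i| ≤ M := fun i =>
    le_ciSup (f := fun j => |a j|) (Set.Finite.bddAbove (Set.finite_range _)) i
  have hM0 : 0 ≤ M := le_trans (abs_nonneg _) (hMle i₀)
  set c := 2 * M * |x| with hc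
  have hc0 : 0 ≤ c := by positivity
  have hc1 : c < 1 := hx
  have h1c : 0 < 1 - c := by linarith
  have hti : ∀ i, |2 * (x * a i)| ≤ c := by
    intro i
    rw [hc]
    calc |2 * (x * a i)| = 2 * |a i| * |x| := by
          rw [abs_mul, abs_mul, abs_two]; ring
      _ ≤ 2 * M * |x| := by
          apply mul_le_mul_of_nonneg_right _ (abs_nonneg x)
          exact mul_le_mul_of_nonneg_left (hMle i) (by norm_num)
  have htlt : ∀ i, x * a i < 1 / 2 := by
    intro i
    have := lt_of_le_of_lt (le_trans (le_abs_self _) (hti i)) hc1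
    linarith
  have ht2 : ∀ i, 0 < 1 - 2 * (x * a i) := by
    intro i
    have := le_trans (le_abs_self _) (hti i)
    linarith
  set X : Fin d → Ω → ℝ := fun i ω => a i * ((Y i ω) ^ 2 - 1) with hX
  have hXmeas : ∀ i, Measurable (X i) := fun i =>
    (((hmeas i).pow_const 2).sub measurable_const).const_mul (a i)
  have hXindep : iIndepFun X μ := by
    have := hindep.comp (fun i (y : ℝ) => a i * (y ^ 2 - 1))
      (fun i => ((measurable_id.pow_const 2).sub measurable_const).const_mul (a i))
    exact this
  have hmgf_i : ∀ i, mgf (X i) μ x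
      = Real.exp (-(x * a i)) * (Real.sqrt (1 - 2 * (x * a i)))⁻¹ := by
    intro i
    have h1 : mgf (X i) μ x
        = ∫ y, Real.exp (x * (a i * (y ^ 2 - 1))) ∂(μ.map (Y i)) := by
      rw [integral_map (hmeas i).aemeasurable]
      · rfl
      · exact (Measurable.aestronglyMeasurable (by measurability))
    rw [h1, hdist i]
    have hrw : ∀ y : ℝ, Real.exp (x * (a i * (y ^ 2 - 1)))
        = Real.exp (-(x * a i)) * Real.exp ((x * a i) * y ^ 2) := by
      intro y
      rw [← Real.exp_add]
      ring_nf
    simp_rw [hrw]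
    rw [integral_const_mul, gaussian_sq_mgf (htlt i)]
  have hpos : ∀ i, 0 < mgf (X i) μ x := by
    intro i
    rw [hmgf_i i]
    exact mul_pos (Real.exp_pos _) (inv_pos.2 (Real.sqrt_pos.2 (ht2 i)))
  have hprod : (∫ ω, Real.exp (x * ∑ i, a i * ((Y i ω) ^ 2 - 1)) ∂μ)
      = ∏ i, mgf (X i) μ x := by
    rw [← hXindep.mgf_sum hXmeas Finset.univ]
    simp only [mgf, Finset.sum_apply]
    rfl
  rw [hprod, Real.log_prod (fun i _ => (hpos i).ne')]
  have hlog_i : ∀ i, Real.log (mgf (X i) μ x)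
      = -(x * a i) - Real.log (1 - 2 * (x * a i)) / 2 := by
    intro i
    rw [hmgf_i i, Real.log_mul (Real.exp_ne_zero _)
      (inv_ne_zero (ne_of_gt (Real.sqrt_pos.2 (ht2 i)))),
      Real.log_exp, Real.log_inv, Real.log_sqrt (ht2 i).le]
    ring
  calc ∑ i, Real.log (mgf (X i) μ x)
      ≤ ∑ i, (x * a i) ^ 2 / (1 - c) := by
        apply Finset.sum_le_sum
        intro i _
        rw [hlog_i i]
        exact aux_log_bound hc1 (hti i)
    _ = (∑ i, (a i) ^ 2) * x ^ 2 / (1 - c) := by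
        rw [← Finset.sum_div, Finset.sum_mul]
        congr 1
        exact Finset.sum_congr rfl fun i _ => by ring
end

section
/- Let Y₁,…,Y_m be i.i.d. standard Gaussian random variables, let X = ∑_{i=1}^m Y_i², and define the normalized statistic L = (X − m)/√m. Then for every t ≥ 0, P(L > 2t + 2t²/√m) ≤ exp(−t²). -/
open MeasureTheory ProbabilityTheory Real
open scoped ENNReal NNReal

lemma gauss_density_eq {c : ℝ} :
    (fun x : ℝ => gaussianPDFReal 0 1 x * Real.exp (c * x ^ 2))
      = fun x : ℝ => (Real.sqrt (2 * π))⁻¹ * Real.exp (-(1/2 - c) * x ^ 2) := by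
  funext x
  rw [gaussianPDFReal]
  push_cast
  rw [mul_one, mul_assoc, ← Real.exp_add]
  ring_nf

lemma gauss_withDensity : gaussianReal 0 1
    = volume.withDensity (fun x => ((gaussianPDFReal 0 1 x).toNNReal : ℝ≥0∞)) := by
  rw [gaussianReal_of_var_ne_zero _ one_ne_zero]
  rfl

lemma integrable_exp_mul_sq_gaussian {c : ℝ} (hc : c < 1/2) :
    Integrable (fun x => Real.exp (c * x ^ 2)) (gaussianReal 0 1) := by
  rw [gauss_withDensity,
    integrable_withDensity_iff_integrable_smul
      ((measurable_gaussianPDFReal 0 1).real_toNNReal)]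
  have : (fun x : ℝ => ((gaussianPDFReal 0 1 x).toNNReal : ℝ≥0)
      • Real.exp (c * x ^ 2))
      = fun x : ℝ => (Real.sqrt (2 * π))⁻¹ * Real.exp (-(1/2 - c) * x ^ 2) := by
    rw [← gauss_density_eq]
    funext x
    rw [NNReal.smul_def, smul_eq_mul, Real.coe_toNNReal _ (gaussianPDFReal_nonneg _ _ _)]
  rw [this]
  exact (integrable_exp_neg_mul_sq (by linarith)).const_mul _

lemma integral_exp_mul_sq_gaussian {c : ℝ} (hc : c < 1/2) :
    ∫ x, Real.exp (c * x ^ 2) ∂(gaussianReal 0 1) = (Real.sqrt (1 - 2*c))⁻¹ := by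
  rw [gauss_withDensity, integral_withDensity_eq_integral_smul
      ((measurable_gaussianPDFReal 0 1).real_toNNReal)]
  have : (fun x : ℝ => ((gaussianPDFReal 0 1 x).toNNReal : ℝ≥0)
      • Real.exp (c * x ^ 2))
      = fun x : ℝ => (Real.sqrt (2 * π))⁻¹ * Real.exp (-(1/2 - c) * x ^ 2) := by
    rw [← gauss_density_eq]
    funext x
    rw [NNReal.smul_def, smul_eq_mul, Real.coe_toNNReal _ (gaussianPDFReal_nonneg _ _ _)]
  rw [this, integral_const_mul, integral_gaussian]
  have hb : (0:ℝ) < 1/2 - c := by linarith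
  rw [← Real.sqrt_inv, ← Real.sqrt_mul (by positivity), ← Real.sqrt_inv]
  congr 1
  have hπ := Real.pi_pos
  have h1 : (1/2 - c) ≠ 0 := ne_of_gt hb
  have h2 : (1 - 2*c) ≠ 0 := by intro h; apply h1; linarith
  field_simp

/-- Tail bound for the normalized chi-squared statistic: if
`X = ∑ i, Y i ^ 2` with `Y i` i.i.d. `N(0,1)` and `L = (X - m)/√m`, then for every `t ≥ 0`,
`P(L > 2t + 2t²/√m) ≤ exp (-t²)`. -/
theorem chisq_normalized_tail
    {Ω : Type*} [MeasurableSpace Ω] (μ : Measure Ω) [IsProbabilityMeasure μ]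
    {m : ℕ} (Y : Fin m → Ω → ℝ) (hmeas : ∀ i, Measurable (Y i))
    (hindep : iIndepFun Y μ)
    (hdist : ∀ i, μ.map (Y i) = gaussianReal 0 1)
    (t : ℝ) (ht : 0 ≤ t) :
    μ {ω | 2 * t + 2 * t ^ 2 / Real.sqrt m
        < ((∑ i, (Y i ω) ^ 2) - m) / Real.sqrt m}
      ≤ ENNReal.ofReal (Real.exp (-t ^ 2)) := by
  rcases Nat.eq_zero_or_pos m with hm | hm
  · subst hm
    have hempty : {ω : Ω | 2 * t + 2 * t ^ 2 / Real.sqrt (0:ℕ)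
        < ((∑ i : Fin 0, (Y i ω) ^ 2) - (0:ℕ)) / Real.sqrt (0:ℕ)} = ∅ := by
      ext ω
      simp only [Set.mem_setOf_eq, Nat.cast_zero, Real.sqrt_zero, div_zero,
        Finset.univ_eq_empty, Finset.sum_empty, Set.mem_empty_iff_false, iff_false, not_lt]
      positivity
    rw [hempty]
    simp
  · -- main case
    have hm1 : (1:ℝ) ≤ (m:ℝ) := by exact_mod_cast hm
    set M : ℝ := (m:ℝ) with hM_def
    set s : ℝ := Real.sqrt M with hs_def
    have hs : 0 < s := Real.sqrt_pos.mpr (by linarith)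
    have hs2 : s ^ 2 = M := Real.sq_sqrt (by linarith)
    set a : ℝ := 2 * s * t + 2 * t ^ 2 with ha_def
    have ha : 0 ≤ a := by positivity
    have hMa : 0 < M + a := by linarith
    set lam : ℝ := a / (2 * (M + a)) with hlam_def
    have hlam0 : 0 ≤ lam := by positivity
    have hlamlt : lam < 1 / 2 := by
      rw [hlam_def, div_lt_iff₀ (by linarith)]
      linarith
    have h2lam : 1 - 2 * lam = M / (M + a) := by
      rw [hlam_def]
      field_simp
      ring
    set Z : Fin m → Ω → ℝ := fun i ω => (Y i ω) ^ 2 with hZ_def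
    have hZmeas : ∀ i, Measurable (Z i) := fun i => (hmeas i).pow_const 2
    have hZindep : iIndepFun Z μ :=
      hindep.comp (fun _ => fun x : ℝ => x ^ 2) (fun _ => measurable_id.pow_const 2)
    have hint : ∀ i, Integrable (fun ω => Real.exp (lam * Z i ω)) μ := by
      intro i
      have h1 : Integrable (fun x : ℝ => Real.exp (lam * x ^ 2)) (μ.map (Y i)) := by
        rw [hdist i]
        exact integrable_exp_mul_sq_gaussian hlamlt
      have hgm : Measurable fun x : ℝ => Real.exp (lam * x ^ 2) := by fun_prop
      rwa [integrable_map_measure hgm.aestronglyMeasurable (hmeas i).aemeasurable] at h1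
    have hmgf : ∀ i, mgf (Z i) μ lam = (Real.sqrt (1 - 2 * lam))⁻¹ := by
      intro i
      rw [mgf]
      have h1 : ∫ ω, Real.exp (lam * Z i ω) ∂μ
          = ∫ x, Real.exp (lam * x ^ 2) ∂(μ.map (Y i)) := by
        have hgm : Measurable fun x : ℝ => Real.exp (lam * x ^ 2) := by fun_prop
        rw [integral_map (hmeas i).aemeasurable hgm.aestronglyMeasurable]
      rw [h1, hdist i, integral_exp_mul_sq_gaussian hlamlt]
    have hS : mgf (∑ i, Z i) μ lam = ((Real.sqrt (1 - 2 * lam))⁻¹) ^ m := by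
      rw [hZindep.mgf_sum hZmeas]
      simp only [hmgf, Finset.prod_const, Finset.card_univ, Fintype.card_fin]
    have hintS : Integrable (fun ω => Real.exp (lam * (∑ i, Z i) ω)) μ :=
      hZindep.integrable_exp_mul_sum hZmeas (fun i _ => hint i)
    have hch := measure_ge_le_exp_mul_mgf (X := ∑ i, Z i) (μ := μ) (M + a) hlam0 hintS
    rw [hS] at hch
    have hsub : {ω | 2 * t + 2 * t ^ 2 / s < ((∑ i, (Y i ω) ^ 2) - M) / s}
        ⊆ {ω | M + a ≤ (∑ i, Z i) ω} := by
      intro ω hω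
      simp only [Set.mem_setOf_eq] at hω ⊢
      have hsum : (∑ i, Z i) ω = ∑ i, (Y i ω) ^ 2 := by
        simp [hZ_def]
      rw [hsum]
      have h2 : (2 * t + 2 * t ^ 2 / s) * s < (∑ i, (Y i ω) ^ 2) - M :=
        (lt_div_iff₀ hs).mp hω
      have h3 : (2 * t + 2 * t ^ 2 / s) * s = a := by
        rw [ha_def]
        field_simp
      rw [h3] at h2
      linarith
    -- the scalar bound
    have hnum : Real.exp (-lam * (M + a)) * ((Real.sqrt (1 - 2 * lam))⁻¹) ^ m
        ≤ Real.exp (-t ^ 2) := by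
      have hr1 : (Real.sqrt (1 - 2 * lam))⁻¹ = Real.sqrt ((M + a) / M) := by
        rw [h2lam, ← Real.sqrt_inv, inv_div]
      have hrle : (M + a) / M ≤ Real.exp (2 * t / s) := by
        have hq := Real.sum_le_exp_of_nonneg (x := 2 * t / s) (by positivity) 3
        have hsum3 : ∑ i ∈ Finset.range 3, (2 * t / s) ^ i / (Nat.factorial i)
            = 1 + 2 * t / s + (2 * t / s) ^ 2 / 2 := by
          simp [Finset.sum_range_succ, Nat.factorial]
          try ring
        rw [hsum3] at hq
        have heq : (M + a) / M = 1 + 2 * t / s + (2 * t / s) ^ 2 / 2 := by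
          rw [ha_def, ← hs2]
          field_simp
          ring
        linarith
      have h1 : Real.sqrt ((M + a) / M) ≤ Real.exp (t / s) := by
        rw [show t / s = (2 * t / s) / 2 by ring, Real.exp_half]
        exact Real.sqrt_le_sqrt hrle
      have h2 : (Real.sqrt ((M + a) / M)) ^ m ≤ (Real.exp (t / s)) ^ m :=
        pow_le_pow_left₀ (Real.sqrt_nonneg _) h1 m
      have h3 : (Real.exp (t / s)) ^ m = Real.exp (s * t) := by
        rw [← Real.exp_nat_mul]
        congr 1
        rw [show ((m:ℝ)) = s ^ 2 from hs2.symm]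
        field_simp
      have h4 : -lam * (M + a) = -(a / 2) := by
        rw [hlam_def]
        field_simp
      calc Real.exp (-lam * (M + a)) * ((Real.sqrt (1 - 2 * lam))⁻¹) ^ m
          = Real.exp (-(a / 2)) * (Real.sqrt ((M + a) / M)) ^ m := by rw [h4, hr1]
        _ ≤ Real.exp (-(a / 2)) * Real.exp (s * t) := by
            rw [← h3]
            exact mul_le_mul_of_nonneg_left h2 (Real.exp_pos _).le
        _ = Real.exp (-t ^ 2) := by
            rw [← Real.exp_add]
            congr 1
            rw [ha_def]
            ring
    calc μ {ω | 2 * t + 2 * t ^ 2 / s < ((∑ i, (Y i ω) ^ 2) - M) / s}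
        ≤ μ {ω | M + a ≤ (∑ i, Z i) ω} := measure_mono hsub
      _ = ENNReal.ofReal ((μ {ω | M + a ≤ (∑ i, Z i) ω}).toReal) :=
          (ENNReal.ofReal_toReal (measure_ne_top μ _)).symm
      _ ≤ ENNReal.ofReal (Real.exp (-lam * (M + a)) * ((Real.sqrt (1 - 2 * lam))⁻¹) ^ m) :=
          ENNReal.ofReal_le_ofReal hch
      _ ≤ ENNReal.ofReal (Real.exp (-t ^ 2)) := ENNReal.ofReal_le_ofReal hnum
end

section
/- Let (Y_i)_{i∈ι} be i.i.d. standard Gaussian random variables indexed by a finite set ι, and for a nonempty subset R ⊆ ι define the normalized region statistic L_R = (∑_{i∈R}(Y_i² − 1))/√|R|. For nonempty subsets R₁, R₂ ⊆ ι define the distance d(R₁,R₂) = 1 − |R₁∩R₂|/√(|R₁||R₂|). Then for every t ≥ 0, P(|L_{R₁} − L_{R₂}| > 2√(2 d(R₁,R₂)) t + 2t²/√(min(|R₁|,|R₂|))) ≤ 2 exp(−t²). -/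
open MeasureTheory ProbabilityTheory Real
open scoped ENNReal NNReal

lemma aux_deriv_pos {x : ℝ} (hx : x ∈ Set.Ioo (0:ℝ) (1/2)) :
    HasDerivAt (fun s : ℝ => s^2/(1-2*s) + s + Real.log (1-2*s)/2)
      (2*x^2/(1-2*x)^2) x := by
  obtain ⟨hx0, hx2⟩ := hx
  have hne : 1 - 2*x ≠ 0 := by nlinarith
  have h1 : HasDerivAt (fun s : ℝ => 1 - 2*s) (-2) x := by
    simpa only [id_eq, mul_one] using ((hasDerivAt_id x).const_mul (2:ℝ)).const_sub 1
  have h2 : HasDerivAt (fun s : ℝ => s^2) (2*x) x := by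
    simpa using (hasDerivAt_pow 2 x)
  have hdiv := h2.div h1 hne
  have hlog := (h1.log hne).div_const 2
  have := (hdiv.add (hasDerivAt_id x)).add hlog
  refine this.congr_deriv ?_
  field_simp
  ring

lemma aux_ineq_pos {s : ℝ} (h0 : 0 ≤ s) (h2 : s < 1/2) :
    -s ≤ s^2/(1-2*s) + Real.log (1-2*s)/2 := by
  set f : ℝ → ℝ := fun s => s^2/(1-2*s) + s + Real.log (1-2*s)/2 with hf
  have hmono : MonotoneOn f (Set.Ico (0:ℝ) (1/2)) := by
    apply monotoneOn_of_deriv_nonneg (convex_Ico _ _)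
    · apply ContinuousOn.add
      apply ContinuousOn.add
      · exact ContinuousOn.div (by fun_prop) (by fun_prop)
          (fun x hx => by rw [Set.mem_Ico] at hx; nlinarith [hx.2])
      · exact continuousOn_id
      · apply ContinuousOn.div_const
        apply ContinuousOn.log (by fun_prop)
          (fun x hx => by rw [Set.mem_Ico] at hx; nlinarith [hx.2])
    · intro x hx
      rw [interior_Ico] at hx
      exact (aux_deriv_pos hx).differentiableAt.differentiableWithinAt
    · intro x hx
      rw [interior_Ico] at hx
      rw [(aux_deriv_pos hx).deriv]
      have : (0:ℝ) < 1 - 2*x := by rw [Set.mem_Ioo] at hx; nlinarith [hx.2]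
      positivity
  have h00 : (0:ℝ) ∈ Set.Ico (0:ℝ) (1/2) := by constructor <;> norm_num
  have hs : s ∈ Set.Ico (0:ℝ) (1/2) := ⟨h0, h2⟩
  have := hmono h00 hs h0
  simp only [hf] at this
  norm_num at this
  linarith

lemma aux_deriv_neg {x : ℝ} (hx : x ∈ Set.Ioo (-(1/2):ℝ) 0) :
    HasDerivAt (fun s : ℝ => s^2/(1+2*s) + s + Real.log (1-2*s)/2)
      (-(2*x^2*(5+6*x))/((1+2*x)^2*(1-2*x))) x := by
  obtain ⟨hx0, hx2⟩ := hx
  have hne : 1 + 2*x ≠ 0 := by nlinarith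
  have hne' : 1 - 2*x ≠ 0 := by nlinarith
  have h1 : HasDerivAt (fun s : ℝ => 1 + 2*s) (2) x := by
    simpa using (hasDerivAt_id x).const_mul (2:ℝ) |>.const_add 1
  have h1' : HasDerivAt (fun s : ℝ => 1 - 2*s) (-2) x := by
    simpa only [id_eq, mul_one] using ((hasDerivAt_id x).const_mul (2:ℝ)).const_sub 1
  have h2 : HasDerivAt (fun s : ℝ => s^2) (2*x) x := by
    simpa using (hasDerivAt_pow 2 x)
  have hdiv := h2.div h1 hne
  have hlog := (h1'.log hne').div_const 2
  have := (hdiv.add (hasDerivAt_id x)).add hlog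
  refine this.congr_deriv ?_
  field_simp
  ring

lemma aux_ineq_neg {s : ℝ} (h0 : s ≤ 0) (h2 : -(1/2) < s) :
    -s ≤ s^2/(1+2*s) + Real.log (1-2*s)/2 := by
  set f : ℝ → ℝ := fun s => s^2/(1+2*s) + s + Real.log (1-2*s)/2 with hf
  have hmono : AntitoneOn f (Set.Ioc (-(1/2):ℝ) 0) := by
    apply antitoneOn_of_deriv_nonpos (convex_Ioc _ _)
    · apply ContinuousOn.add
      apply ContinuousOn.add
      · exact ContinuousOn.div (by fun_prop) (by fun_prop)
          (fun x hx => by rw [Set.mem_Ioc] at hx; nlinarith [hx.1])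
      · exact continuousOn_id
      · apply ContinuousOn.div_const
        apply ContinuousOn.log (by fun_prop)
          (fun x hx => by rw [Set.mem_Ioc] at hx; nlinarith [hx.1, hx.2])
    · intro x hx
      rw [interior_Ioc] at hx
      exact (aux_deriv_neg hx).differentiableAt.differentiableWithinAt
    · intro x hx
      rw [interior_Ioc] at hx
      rw [(aux_deriv_neg hx).deriv]
      rw [Set.mem_Ioo] at hx
      have hb : (0:ℝ) < 1 + 2*x := by nlinarith [hx.1]
      have hb' : (0:ℝ) < 1 - 2*x := by nlinarith [hx.2]
      have hb'' : (0:ℝ) < 5 + 6*x := by nlinarith [hx.1]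
      rw [neg_div]
      have : 0 ≤ (2*x^2*(5+6*x))/((1+2*x)^2*(1-2*x)) := by positivity
      linarith
  have h00 : (0:ℝ) ∈ Set.Ioc (-(1/2):ℝ) 0 := by constructor <;> norm_num
  have hs : s ∈ Set.Ioc (-(1/2):ℝ) 0 := ⟨h2, h0⟩
  have := hmono hs h00 h0
  simp only [hf] at this
  norm_num at this
  linarith

lemma gauss_pdf_mul {s : ℝ} (x : ℝ) :
    gaussianPDFReal 0 1 x * Real.exp (s*(x^2-1))
      = ((Real.sqrt (2*π))⁻¹ * Real.exp (-s)) * Real.exp (-(1/2 - s) * x^2) := by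
  simp only [gaussianPDFReal, NNReal.coe_one, mul_one, sub_zero]
  rw [mul_assoc, mul_assoc, ← Real.exp_add, ← Real.exp_add]
  ring_nf

lemma gauss_int_raw {s : ℝ} (hs : s < 1/2) :
    (∫ x : ℝ, gaussianPDFReal 0 1 x * Real.exp (s*(x^2-1)))
      = Real.exp (-s) / Real.sqrt (1-2*s) := by
  have h : (0:ℝ) < 1/2 - s := by linarith
  simp only [gauss_pdf_mul]
  rw [MeasureTheory.integral_const_mul, integral_gaussian]
  have hπ : (0:ℝ) < π := pi_pos
  rw [show (1:ℝ) - 2*s = 2*(1/2-s) by ring]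
  rw [Real.sqrt_mul (by norm_num : (0:ℝ) ≤ 2), Real.sqrt_mul (by norm_num : (0:ℝ) ≤ 2),
    Real.sqrt_div hπ.le]
  have h1 : Real.sqrt π ≠ 0 := by positivity
  have h2 : Real.sqrt (1/2-s) ≠ 0 := by positivity
  have h3 : Real.sqrt 2 ≠ 0 := by positivity
  field_simp

lemma gauss_integrable {s : ℝ} (hs : s < 1/2) :
    Integrable (fun x => Real.exp (s*(x^2-1))) (gaussianReal 0 1) := by
  rw [gaussianReal_of_var_ne_zero 0 one_ne_zero, gaussianPDF_def]
  have hm : Measurable fun x => (gaussianPDFReal 0 1 x).toNNReal :=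
    (measurable_gaussianPDFReal 0 1).real_toNNReal
  rw [show (fun x => ENNReal.ofReal (gaussianPDFReal 0 1 x))
      = fun x => ((gaussianPDFReal 0 1 x).toNNReal : ℝ≥0∞) from rfl]
  rw [integrable_withDensity_iff_integrable_smul hm]
  have heq : ∀ x : ℝ, (gaussianPDFReal 0 1 x).toNNReal • Real.exp (s*(x^2-1))
      = ((Real.sqrt (2*π))⁻¹ * Real.exp (-s)) * Real.exp (-(1/2-s)*x^2) := by
    intro x
    rw [NNReal.smul_def, smul_eq_mul, Real.coe_toNNReal _ (gaussianPDFReal_nonneg 0 1 x),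
      gauss_pdf_mul]
  have hint := (integrable_exp_neg_mul_sq (show (0:ℝ) < 1/2 - s by linarith)).const_mul
    ((Real.sqrt (2*π))⁻¹ * Real.exp (-s))
  exact hint.congr (ae_of_all _ fun x => (heq x).symm)

lemma gauss_mgf_int {s : ℝ} (hs : s < 1/2) :
    ∫ x, Real.exp (s*(x^2-1)) ∂(gaussianReal 0 1) = Real.exp (-s) / Real.sqrt (1-2*s) := by
  rw [gaussianReal_of_var_ne_zero 0 one_ne_zero, gaussianPDF_def]
  have hm : Measurable fun x => (gaussianPDFReal 0 1 x).toNNReal :=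
    (measurable_gaussianPDFReal 0 1).real_toNNReal
  rw [show (fun x => ENNReal.ofReal (gaussianPDFReal 0 1 x))
      = fun x => ((gaussianPDFReal 0 1 x).toNNReal : ℝ≥0∞) from rfl]
  rw [integral_withDensity_eq_integral_smul hm]
  rw [← gauss_int_raw hs]
  refine integral_congr_ae (ae_of_all _ fun x => ?_)
  show (gaussianPDFReal 0 1 x).toNNReal • Real.exp (s*(x^2-1))
      = gaussianPDFReal 0 1 x * Real.exp (s*(x^2-1))
  rw [NNReal.smul_def, smul_eq_mul, Real.coe_toNNReal _ (gaussianPDFReal_nonneg 0 1 x)]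

lemma mgf_term_bound {s : ℝ} (hs : |s| < 1/2) :
    Real.exp (-s) / Real.sqrt (1-2*s) ≤ Real.exp (s^2/(1-2*|s|)) := by
  have habs := abs_lt.mp hs
  have h2 : s < 1/2 := habs.2
  have hpos : (0:ℝ) < 1 - 2*s := by linarith
  have hsq : (0:ℝ) < Real.sqrt (1-2*s) := Real.sqrt_pos.mpr hpos
  rw [div_le_iff₀ hsq]
  have hlog : Real.sqrt (1-2*s) = Real.exp (Real.log (1-2*s)/2) := by
    rw [← Real.log_sqrt hpos.le, Real.exp_log hsq]
  rw [hlog, ← Real.exp_add, Real.exp_le_exp]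
  rcases le_or_gt 0 s with h0 | h0
  · rw [abs_of_nonneg h0]
    linarith [aux_ineq_pos h0 h2]
  · rw [abs_of_neg h0, show (1:ℝ)-2*(-s) = 1+2*s by ring]
    linarith [aux_ineq_neg h0.le (by linarith [habs.1] : -(1/2) < s)]

lemma region_onesided
    {ι : Type*} [Fintype ι]
    {Ω : Type*} [MeasurableSpace Ω] (μ : Measure Ω) [IsProbabilityMeasure μ]
    (Y : ι → Ω → ℝ) (hmeas : ∀ i, Measurable (Y i))
    (hindep : iIndepFun Y μ)
    (hdist : ∀ i, μ.map (Y i) = gaussianReal 0 1)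
    (a : ι → ℝ) (M : ℝ) (hM0 : 0 < M) (hM : ∀ i, |a i| ≤ M)
    (t : ℝ) (ht : 0 ≤ t) :
    μ {ω | 2 * Real.sqrt (∑ i, a i^2) * t + 2*M*t^2 ≤ ∑ i, a i * (Y i ω^2 - 1)}
      ≤ ENNReal.ofReal (Real.exp (-t^2)) := by
  rcases ht.eq_or_lt with h | ht0
  · subst h
    calc μ _ ≤ 1 := prob_le_one
    _ = ENNReal.ofReal (Real.exp (-(0:ℝ)^2)) := by norm_num
  set v := ∑ i, a i^2 with hv
  have hv0 : (0:ℝ) ≤ v := Finset.sum_nonneg fun i _ => sq_nonneg _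
  by_cases hvz : v = 0
  · have haz : ∀ i, a i = 0 := by
      intro i
      have := (Finset.sum_eq_zero_iff_of_nonneg
        (fun i _ => sq_nonneg (a i))).mp hvz i (Finset.mem_univ i)
      exact pow_eq_zero_iff two_ne_zero |>.mp this
    have hset : {ω | 2 * Real.sqrt v * t + 2*M*t^2 ≤ ∑ i, a i * (Y i ω^2 - 1)} = ∅ := by
      ext ω
      simp only [Set.mem_setOf_eq, Set.mem_empty_iff_false, iff_false, not_le, haz, hvz]
      simp only [zero_mul, Finset.sum_const_zero]
      rw [Real.sqrt_zero]
      nlinarith [mul_pos hM0 (pow_pos ht0 2)]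
    rw [hset]
    simp
  have hvpos : 0 < v := lt_of_le_of_ne hv0 (Ne.symm hvz)
  set w := Real.sqrt v with hwdef
  have hw : 0 < w := Real.sqrt_pos.mpr hvpos
  have hwsq : w^2 = v := Real.sq_sqrt hv0
  set D := w + 2*M*t with hD
  have hDpos : 0 < D := by positivity
  set l := t / D with hl
  have hl0 : 0 ≤ l := div_nonneg ht0.le hDpos.le
  have hlM : l * M < 1/2 := by
    rw [hl, div_mul_eq_mul_div, div_lt_iff₀ hDpos]
    rw [hD]
    nlinarith
  have h1lM : (0:ℝ) < 1 - 2*(l*M) := by linarith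
  have hsi : ∀ i, |l * a i| ≤ l * M := by
    intro i
    rw [abs_mul, abs_of_nonneg hl0]
    exact mul_le_mul_of_nonneg_left (hM i) hl0
  have hsi2 : ∀ i, |l * a i| < 1/2 := fun i => lt_of_le_of_lt (hsi i) hlM
  set X : ι → Ω → ℝ := fun i ω => a i * (Y i ω^2 - 1) with hX
  have hXmeas : ∀ i, Measurable (X i) :=
    fun i => (((hmeas i).pow_const 2).sub measurable_const).const_mul (a i)
  have hXindep : iIndepFun X μ :=
    hindep.comp (fun i x => a i * (x^2 - 1))
      (fun i => ((measurable_id.pow_const 2).sub measurable_const).const_mul (a i))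
  have hint : ∀ i, Integrable (fun ω => Real.exp (l * X i ω)) μ := by
    intro i
    have h1 : Integrable (fun x => Real.exp ((l * a i) * (x^2-1))) (μ.map (Y i)) := by
      rw [hdist i]
      exact gauss_integrable (lt_of_le_of_lt (le_abs_self _) (hsi2 i))
    have h2 := (integrable_map_measure h1.aestronglyMeasurable
      (hmeas i).aemeasurable).mp h1
    refine h2.congr (ae_of_all _ fun ω => ?_)
    simp only [Function.comp, hX]
    congr 1
    ring
  have hmgf : ∀ i, mgf (X i) μ l ≤ Real.exp (l^2 * a i^2 / (1 - 2*(l*M))) := by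
    intro i
    have hsmall : l * a i < 1/2 := lt_of_le_of_lt (le_abs_self _) (hsi2 i)
    have hmap : mgf (X i) μ l = ∫ x, Real.exp ((l * a i) * (x^2-1)) ∂(gaussianReal 0 1) := by
      rw [← hdist i]
      rw [integral_map (hmeas i).aemeasurable
        (by rw [hdist i]; exact (gauss_integrable hsmall).aestronglyMeasurable)]
      refine integral_congr_ae (ae_of_all _ fun ω => ?_)
      simp only [hX]
      congr 1
      ring
    rw [hmap, gauss_mgf_int hsmall]
    refine le_trans (mgf_term_bound (hsi2 i)) ?_
    rw [Real.exp_le_exp]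
    have h2' : 1 - 2*(l*M) ≤ 1 - 2*|l * a i| := by linarith [hsi i]
    calc (l*a i)^2/(1-2*|l*a i|) ≤ (l*a i)^2/(1-2*(l*M)) := by gcongr
    _ = l^2 * a i^2/(1-2*(l*M)) := by ring_nf
  have hintsum : Integrable (fun ω => Real.exp (l * (∑ i, X i) ω)) μ :=
    hXindep.integrable_exp_mul_sum hXmeas (fun i _ => hint i)
  have hchern := measure_ge_le_exp_mul_mgf (μ := μ) (X := ∑ i, X i)
    (2*w*t + 2*M*t^2) hl0 hintsum
  have hmgfsum : mgf (∑ i, X i) μ l ≤ Real.exp (l^2 * v / (1-2*(l*M))) := by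
    rw [hXindep.mgf_sum hXmeas]
    calc ∏ i, mgf (X i) μ l ≤ ∏ i, Real.exp (l^2*(a i)^2/(1-2*(l*M))) :=
      Finset.prod_le_prod (fun i _ => mgf_nonneg) (fun i _ => hmgf i)
    _ = Real.exp (∑ i, l^2*(a i)^2/(1-2*(l*M))) := (Real.exp_sum _ _).symm
    _ = _ := by
        congr 1
        rw [← Finset.sum_div, ← Finset.mul_sum]
  have key : -l * (2*w*t + 2*M*t^2) + l^2 * v / (1-2*(l*M)) = -t^2 := by
    have h1 : 1 - 2*(l*M) = w / D := by
      rw [hl]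
      field_simp
      rw [hD]
      ring
    rw [h1, hl, ← hwsq]
    field_simp
    ring
  have hsetmeas :
      {ω | 2 * Real.sqrt v * t + 2*M*t^2 ≤ ∑ i, a i * (Y i ω^2 - 1)}
        = {ω | 2*w*t + 2*M*t^2 ≤ (∑ i, X i) ω} := by
    ext ω
    simp only [Set.mem_setOf_eq, Finset.sum_apply, hX, hwdef]
  rw [hsetmeas, ENNReal.le_ofReal_iff_toReal_le (measure_ne_top μ _) (Real.exp_nonneg _)]
  calc (μ _).toReal ≤ Real.exp (-l * (2*w*t + 2*M*t^2)) * mgf (∑ i, X i) μ l := hchern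
  _ ≤ Real.exp (-l * (2*w*t + 2*M*t^2)) * Real.exp (l^2 * v / (1-2*(l*M))) := by
      exact mul_le_mul_of_nonneg_left hmgfsum (Real.exp_nonneg _)
  _ = Real.exp (-l * (2*w*t + 2*M*t^2) + l^2 * v / (1-2*(l*M))) := (Real.exp_add _ _).symm
  _ = Real.exp (-t^2) := by rw [key]

/-- Tail bound for the difference of two normalized region statistics
`L_R = (∑ i ∈ R, (Y i ^ 2 - 1))/√|R|` built from i.i.d. standard Gaussians: for `t ≥ 0`,
`P(|L_{R₁} - L_{R₂}| > 2√(2 d(R₁,R₂)) t + 2t²/√(min |R₁| |R₂|)) ≤ 2 exp (-t²)`,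
where `d(R₁,R₂) = 1 - |R₁∩R₂|/√(|R₁||R₂|)`. -/
theorem region_statistic_difference_tail
    {ι : Type*} [Fintype ι] [DecidableEq ι]
    {Ω : Type*} [MeasurableSpace Ω] (μ : Measure Ω) [IsProbabilityMeasure μ]
    (Y : ι → Ω → ℝ) (hmeas : ∀ i, Measurable (Y i))
    (hindep : iIndepFun Y μ)
    (hdist : ∀ i, μ.map (Y i) = gaussianReal 0 1)
    (R₁ R₂ : Finset ι) (h₁ : R₁.Nonempty) (h₂ : R₂.Nonempty)
    (t : ℝ) (ht : 0 ≤ t) :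
    μ {ω | 2 * Real.sqrt (2 * (1 - ((R₁ ∩ R₂).card : ℝ)
              / Real.sqrt ((R₁.card : ℝ) * (R₂.card : ℝ)))) * t
          + 2 * t ^ 2 / Real.sqrt (min (R₁.card : ℝ) (R₂.card : ℝ))
        < |(∑ i ∈ R₁, ((Y i ω) ^ 2 - 1)) / Real.sqrt (R₁.card : ℝ)
            - (∑ i ∈ R₂, ((Y i ω) ^ 2 - 1)) / Real.sqrt (R₂.card : ℝ)|}
      ≤ ENNReal.ofReal (2 * Real.exp (-t ^ 2)) := by
  set n₁ := (R₁.card : ℝ) with hn₁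
  set n₂ := (R₂.card : ℝ) with hn₂
  have hn₁pos : 0 < n₁ := by rw [hn₁]; exact_mod_cast Finset.card_pos.mpr h₁
  have hn₂pos : 0 < n₂ := by rw [hn₂]; exact_mod_cast Finset.card_pos.mpr h₂
  have hs₁ : 0 < Real.sqrt n₁ := Real.sqrt_pos.mpr hn₁pos
  have hs₂ : 0 < Real.sqrt n₂ := Real.sqrt_pos.mpr hn₂pos
  set a : ι → ℝ := fun i =>
    (if i ∈ R₁ then (Real.sqrt n₁)⁻¹ else 0) - (if i ∈ R₂ then (Real.sqrt n₂)⁻¹ else 0) with ha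
  set M : ℝ := (Real.sqrt (min n₁ n₂))⁻¹ with hMdef
  have hminpos : 0 < min n₁ n₂ := lt_min hn₁pos hn₂pos
  have hM0 : 0 < M := by
    rw [hMdef]
    positivity
  have hM : ∀ i, |a i| ≤ M := by
    intro i
    have hb₁ : (Real.sqrt n₁)⁻¹ ≤ M := by
      rw [hMdef]
      exact one_div_le_one_div_of_le (Real.sqrt_pos.mpr hminpos)
        (Real.sqrt_le_sqrt (min_le_left _ _)) |>.trans_eq (by rw [one_div]) |>.trans_eq' (by rw [one_div])
    have hb₂ : (Real.sqrt n₂)⁻¹ ≤ M := by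
      rw [hMdef]
      exact one_div_le_one_div_of_le (Real.sqrt_pos.mpr hminpos)
        (Real.sqrt_le_sqrt (min_le_right _ _)) |>.trans_eq (by rw [one_div]) |>.trans_eq' (by rw [one_div])
    have h01 : (0:ℝ) ≤ (Real.sqrt n₁)⁻¹ := by positivity
    have h02 : (0:ℝ) ≤ (Real.sqrt n₂)⁻¹ := by positivity
    rw [ha, abs_le]
    by_cases hi1 : i ∈ R₁ <;> by_cases hi2 : i ∈ R₂ <;>
      simp only [hi1, hi2, if_true, if_false] <;> constructor <;> linarith
  have hvsum : ∑ i, a i^2 = 2 * (1 - ((R₁ ∩ R₂).card : ℝ) / Real.sqrt (n₁ * n₂)) := by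
    have hexp : ∀ i, a i^2 = (if i ∈ R₁ then n₁⁻¹ else 0) + (if i ∈ R₂ then n₂⁻¹ else 0)
        - (if i ∈ R₁ ∩ R₂ then 2 * ((Real.sqrt n₁)⁻¹ * (Real.sqrt n₂)⁻¹) else 0) := by
      intro i
      rw [ha]
      by_cases hi1 : i ∈ R₁ <;> by_cases hi2 : i ∈ R₂ <;>
        simp only [hi1, hi2, Finset.mem_inter, true_and, and_true, if_true, if_false,
          and_self, false_and] <;>
        simp [sub_sq, ← Real.sqrt_inv, Real.sq_sqrt (inv_nonneg.mpr hn₁pos.le),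
          Real.sq_sqrt (inv_nonneg.mpr hn₂pos.le)] <;> ring
    rw [Finset.sum_congr rfl (fun i _ => hexp i)]
    rw [Finset.sum_sub_distrib, Finset.sum_add_distrib]
    rw [Finset.sum_ite_mem, Finset.sum_ite_mem, Finset.sum_ite_mem,
      Finset.univ_inter, Finset.univ_inter, Finset.univ_inter]
    rw [Finset.sum_const, Finset.sum_const, Finset.sum_const]
    rw [Real.sqrt_mul hn₁pos.le, nsmul_eq_mul, nsmul_eq_mul, nsmul_eq_mul, ← hn₁, ← hn₂,
      mul_inv_cancel₀ hn₁pos.ne', mul_inv_cancel₀ hn₂pos.ne', div_eq_mul_inv, mul_inv]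
    ring
  have hsum : ∀ ω, ∑ i, a i * (Y i ω^2 - 1)
      = (∑ i ∈ R₁, ((Y i ω) ^ 2 - 1)) / Real.sqrt n₁
        - (∑ i ∈ R₂, ((Y i ω) ^ 2 - 1)) / Real.sqrt n₂ := by
    intro ω
    have hterm : ∀ i, a i * (Y i ω^2 - 1)
        = (if i ∈ R₁ then (Real.sqrt n₁)⁻¹ * (Y i ω^2 - 1) else 0)
          - (if i ∈ R₂ then (Real.sqrt n₂)⁻¹ * (Y i ω^2 - 1) else 0) := by
      intro i
      rw [ha]
      by_cases hi1 : i ∈ R₁ <;> by_cases hi2 : i ∈ R₂ <;>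
        simp only [hi1, hi2, if_true, if_false] <;> ring
    rw [Finset.sum_congr rfl (fun i _ => hterm i), Finset.sum_sub_distrib,
      Finset.sum_ite_mem, Finset.sum_ite_mem, Finset.univ_inter, Finset.univ_inter,
      ← Finset.mul_sum, ← Finset.mul_sum]
    rw [div_eq_mul_inv, div_eq_mul_inv]
    ring
  set ε := 2 * Real.sqrt (2 * (1 - ((R₁ ∩ R₂).card : ℝ) / Real.sqrt (n₁ * n₂))) * t
      + 2 * t ^ 2 / Real.sqrt (min n₁ n₂) with hε
  have hεa : ε = 2 * Real.sqrt (∑ i, a i^2) * t + 2*M*t^2 := by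
    rw [hε, hvsum, hMdef]
    ring
  have hsub : {ω | ε < |(∑ i ∈ R₁, ((Y i ω) ^ 2 - 1)) / Real.sqrt n₁
        - (∑ i ∈ R₂, ((Y i ω) ^ 2 - 1)) / Real.sqrt n₂|}
      ⊆ {ω | 2 * Real.sqrt (∑ i, a i^2) * t + 2*M*t^2 ≤ ∑ i, a i * (Y i ω^2 - 1)}
        ∪ {ω | 2 * Real.sqrt (∑ i, (-a) i^2) * t + 2*M*t^2 ≤ ∑ i, (-a) i * (Y i ω^2 - 1)} := by
    intro ω hω
    simp only [Set.mem_setOf_eq] at hω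
    rw [← hsum ω] at hω
    have hneg : ∑ i, (-a) i^2 = ∑ i, a i^2 := by
      refine Finset.sum_congr rfl fun i _ => ?_
      simp [neg_sq]
    rcases lt_abs.mp hω with h | h
    · left
      simp only [Set.mem_setOf_eq]
      rw [← hεa]
      exact h.le
    · right
      simp only [Set.mem_setOf_eq, hneg]
      rw [← hεa]
      have : ∑ i, (-a) i * (Y i ω^2 - 1) = -∑ i, a i * (Y i ω^2 - 1) := by
        rw [← Finset.sum_neg_distrib]
        exact Finset.sum_congr rfl fun i _ => by simp [ha]; ring
      rw [this]
      exact h.le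
  calc μ _ ≤ μ ({ω | 2 * Real.sqrt (∑ i, a i^2) * t + 2*M*t^2 ≤ ∑ i, a i * (Y i ω^2 - 1)}
        ∪ {ω | 2 * Real.sqrt (∑ i, (-a) i^2) * t + 2*M*t^2 ≤ ∑ i, (-a) i * (Y i ω^2 - 1)}) :=
      measure_mono hsub
  _ ≤ μ {ω | 2 * Real.sqrt (∑ i, a i^2) * t + 2*M*t^2 ≤ ∑ i, a i * (Y i ω^2 - 1)}
      + μ {ω | 2 * Real.sqrt (∑ i, (-a) i^2) * t + 2*M*t^2 ≤ ∑ i, (-a) i * (Y i ω^2 - 1)} :=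
      measure_union_le _ _
  _ ≤ ENNReal.ofReal (Real.exp (-t^2)) + ENNReal.ofReal (Real.exp (-t^2)) := by
      gcongr
      · exact region_onesided μ Y hmeas hindep hdist a M hM0 hM t ht
      · exact region_onesided μ Y hmeas hindep hdist (-a) M hM0
          (fun i => by rw [Pi.neg_apply, abs_neg]; exact hM i) t ht
  _ = ENNReal.ofReal (2 * Real.exp (-t^2)) := by
      rw [← ENNReal.ofReal_add (Real.exp_nonneg _) (Real.exp_nonneg _)]
      ring_nf
end

section
/- Let Y₁,…,Y_m be i.i.d. standard Gaussian random variables, let μ ∈ ℝ^m with δ = ∑_{i=1}^m μ_i², and define the normalized noncentral statistic L = (∑_{i=1}^m (Y_i + μ_i)² − m)/√m. Let N be an integer with N ≥ m ≥ 1, and let q ≥ 0 and K > 0 be real numbers. If the signal strength satisfies δ/√m ≥ 2√(log(N/m)) + q + K·√(2 + 4δ/m), then P( L − 2√(log(N/m)) > q ) ≥ 1 − 1/K². -/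
open MeasureTheory ProbabilityTheory Real Filter
open scoped ENNReal NNReal

namespace NoncentralScanAux

noncomputable def Jg (n : ℕ) : ℝ := ∫ x : ℝ, x ^ n * Real.exp (-(2⁻¹) * x ^ 2)

lemma Jg_def (n : ℕ) : Jg n = ∫ x : ℝ, x ^ n * Real.exp (-(2⁻¹) * x ^ 2) := rfl

lemma Jg_integrable (n : ℕ) :
    Integrable (fun x : ℝ => x ^ n * Real.exp (-(2⁻¹) * x ^ 2)) := by
  have h := integrable_rpow_mul_exp_neg_mul_sq (b := 2⁻¹) (by norm_num) (s := (n : ℝ))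
    (lt_of_lt_of_le (by norm_num) (Nat.cast_nonneg n))
  simpa [Real.rpow_natCast] using h

lemma Jg_tendsto_zero (n : ℕ) :
    Tendsto (fun x : ℝ => x ^ n * Real.exp (-(2⁻¹) * x ^ 2)) (Filter.cocompact ℝ) (nhds 0) := by
  have h := tendsto_rpow_abs_mul_exp_neg_mul_sq_cocompact (a := 2⁻¹) (by norm_num) (n : ℝ)
  rw [tendsto_zero_iff_abs_tendsto_zero]
  refine h.congr fun x => ?_
  simp [Real.rpow_natCast, abs_mul, abs_pow, abs_of_pos (Real.exp_pos _)]

lemma hasDerivAt_gauss (n : ℕ) (x : ℝ) :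
    HasDerivAt (fun x : ℝ => x ^ (n + 1) * Real.exp (-(2⁻¹) * x ^ 2))
      (((n : ℝ) + 1) * (x ^ n * Real.exp (-(2⁻¹) * x ^ 2))
        - x ^ (n + 2) * Real.exp (-(2⁻¹) * x ^ 2)) x := by
  have h1 : HasDerivAt (fun x : ℝ => -(2⁻¹) * x ^ 2) (-x) x := by
    have := (hasDerivAt_pow 2 x).const_mul (-(2⁻¹) : ℝ)
    exact this.congr_deriv (by push_cast; ring)
  have := (hasDerivAt_pow (n + 1) x).mul h1.exp
  refine this.congr_deriv ?_
  push_cast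
  ring

lemma Jg_rec (n : ℕ) : Jg (n + 2) = ((n : ℝ) + 1) * Jg n := by
  have hint : Integrable (fun x : ℝ =>
      ((n : ℝ) + 1) * (x ^ n * Real.exp (-(2⁻¹) * x ^ 2))
        - x ^ (n + 2) * Real.exp (-(2⁻¹) * x ^ 2)) :=
    ((Jg_integrable n).const_mul _).sub (Jg_integrable (n + 2))
  have htop := (Jg_tendsto_zero (n + 1)).mono_left _root_.atTop_le_cocompact
  have hbot := (Jg_tendsto_zero (n + 1)).mono_left _root_.atBot_le_cocompact
  have h0 := MeasureTheory.integral_of_hasDerivAt_of_tendsto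
    (hasDerivAt_gauss n) hint hbot htop
  rw [sub_zero] at h0
  have h1 : ∫ x : ℝ, (((n : ℝ) + 1) * (x ^ n * Real.exp (-(2⁻¹) * x ^ 2))
      - x ^ (n + 2) * Real.exp (-(2⁻¹) * x ^ 2))
      = ((n : ℝ) + 1) * Jg n - Jg (n + 2) := by
    rw [integral_sub ((Jg_integrable n).const_mul _) (Jg_integrable (n + 2)),
      integral_const_mul]
    rfl
  have := h0.symm.trans h1
  linarith

lemma Jg_zero : Jg 0 = Real.sqrt (2 * Real.pi) := by
  have h := integral_gaussian 2⁻¹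
  simp only [Jg, pow_zero, one_mul]
  rw [h]
  congr 1
  field_simp

lemma Jg_one : Jg 1 = 0 := by
  have hderiv : ∀ x : ℝ, HasDerivAt (fun x : ℝ => -Real.exp (-(2⁻¹) * x ^ 2))
      (x ^ 1 * Real.exp (-(2⁻¹) * x ^ 2)) x := by
    intro x
    have h1 : HasDerivAt (fun x : ℝ => -(2⁻¹) * x ^ 2) (-x) x := by
      have := (hasDerivAt_pow 2 x).const_mul (-(2⁻¹) : ℝ)
      exact this.congr_deriv (by push_cast; ring)
    exact (h1.exp.neg).congr_deriv (by ring)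
  have htop : Tendsto (fun x : ℝ => -Real.exp (-(2⁻¹) * x ^ 2)) atTop (nhds 0) := by
    have := ((Jg_tendsto_zero 0).mono_left _root_.atTop_le_cocompact).neg
    simpa using this
  have hbot : Tendsto (fun x : ℝ => -Real.exp (-(2⁻¹) * x ^ 2)) atBot (nhds 0) := by
    have := ((Jg_tendsto_zero 0).mono_left _root_.atBot_le_cocompact).neg
    simpa using this
  have h0 := MeasureTheory.integral_of_hasDerivAt_of_tendsto
    hderiv (Jg_integrable 1) hbot htop
  simpa [Jg] using h0

lemma Jg_two : Jg 2 = Real.sqrt (2 * Real.pi) := by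
  have := Jg_rec 0
  simp [Jg_zero] at this
  simpa using this

lemma Jg_three : Jg 3 = 0 := by
  have := Jg_rec 1
  rw [Jg_one] at this
  simpa using this

lemma Jg_four : Jg 4 = 3 * Real.sqrt (2 * Real.pi) := by
  have := Jg_rec 2
  rw [Jg_two] at this
  rw [show (4:ℕ) = 2+2 from rfl, this]
  norm_num

lemma g0_pdf_eq (x : ℝ) : gaussianPDFReal 0 1 x
    = (Real.sqrt (2 * Real.pi))⁻¹ * Real.exp (-(2⁻¹) * x ^ 2) := by
  simp only [gaussianPDFReal, NNReal.coe_one, mul_one, sub_zero]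
  ring_nf

lemma g0_integral (f : ℝ → ℝ) :
    ∫ x, f x ∂(gaussianReal 0 1) = ∫ x, gaussianPDFReal 0 1 x * f x := by
  rw [gaussianReal_of_var_ne_zero 0 one_ne_zero]
  have hm : Measurable fun x => (gaussianPDFReal 0 1 x).toNNReal :=
    (measurable_gaussianPDFReal 0 1).real_toNNReal
  rw [show gaussianPDF 0 1 = fun x => ((gaussianPDFReal 0 1 x).toNNReal : ℝ≥0∞) from rfl]
  rw [integral_withDensity_eq_integral_smul hm f]
  congr 1; funext x
  simp [NNReal.smul_def, Real.coe_toNNReal _ (gaussianPDFReal_nonneg 0 1 x)]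

lemma g0_integrable (f : ℝ → ℝ)
    (h : Integrable (fun x => gaussianPDFReal 0 1 x * f x) volume) :
    Integrable f (gaussianReal 0 1) := by
  rw [gaussianReal_of_var_ne_zero 0 one_ne_zero]
  have hm : Measurable fun x => (gaussianPDFReal 0 1 x).toNNReal :=
    (measurable_gaussianPDFReal 0 1).real_toNNReal
  rw [show gaussianPDF 0 1 = fun x => ((gaussianPDFReal 0 1 x).toNNReal : ℝ≥0∞) from rfl]
  rw [integrable_withDensity_iff_integrable_smul hm]
  refine h.congr (Filter.Eventually.of_forall fun x => ?_)
  simp [NNReal.smul_def, Real.coe_toNNReal _ (gaussianPDFReal_nonneg 0 1 x)]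

lemma g0_integrable_pow (k : ℕ) : Integrable (fun x : ℝ => x ^ k) (gaussianReal 0 1) := by
  apply g0_integrable
  have h : (fun x : ℝ => gaussianPDFReal 0 1 x * x ^ k)
      = fun x => (Real.sqrt (2 * Real.pi))⁻¹ * (x ^ k * Real.exp (-(2⁻¹) * x ^ 2)) := by
    funext x; rw [g0_pdf_eq]; ring
  rw [h]
  exact (Jg_integrable k).const_mul _

lemma g0_integral_pow (k : ℕ) :
    ∫ x, x ^ k ∂(gaussianReal 0 1) = (Real.sqrt (2 * Real.pi))⁻¹ * Jg k := by
  rw [g0_integral]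
  have h : (fun x : ℝ => gaussianPDFReal 0 1 x * x ^ k)
      = fun x => (Real.sqrt (2 * Real.pi))⁻¹ * (x ^ k * Real.exp (-(2⁻¹) * x ^ 2)) := by
    funext x; rw [g0_pdf_eq]; ring
  rw [h, integral_const_mul, Jg_def]

lemma sqrt_two_pi_pos : (0:ℝ) < Real.sqrt (2 * Real.pi) := by
  have := Real.pi_pos; positivity

lemma g0_M1 : ∫ x, x ∂(gaussianReal 0 1) = 0 := by
  have := g0_integral_pow 1
  simpa [Jg_one] using this

lemma g0_M2 : ∫ x, x ^ 2 ∂(gaussianReal 0 1) = 1 := by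
  rw [g0_integral_pow 2, Jg_two, inv_mul_cancel₀ sqrt_two_pi_pos.ne']

lemma g0_M3 : ∫ x, x ^ 3 ∂(gaussianReal 0 1) = 0 := by
  rw [g0_integral_pow 3, Jg_three, mul_zero]

lemma g0_M4 : ∫ x, x ^ 4 ∂(gaussianReal 0 1) = 3 := by
  rw [g0_integral_pow 4, Jg_four, ← mul_assoc, mul_comm _ (3:ℝ), mul_assoc,
    inv_mul_cancel₀ sqrt_two_pi_pos.ne', mul_one]

lemma g0_I1 (a : ℝ) (c : ℝ) :
    Integrable (fun x : ℝ => c * x + a) (gaussianReal 0 1) := by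
  have := ((g0_integrable_pow 1).const_mul c).add
    (integrable_const (μ := gaussianReal 0 1) a)
  simpa using this

lemma g0_E1 (a : ℝ) (c : ℝ) :
    ∫ x, (c * x + a) ∂(gaussianReal 0 1) = a := by
  rw [integral_add ((by simpa using (g0_integrable_pow 1).const_mul c) :
      Integrable (fun x : ℝ => c * x) (gaussianReal 0 1)) (integrable_const a),
    integral_const_mul]
  have h1 : ∫ x, x ∂(gaussianReal 0 1) = 0 := g0_M1
  rw [h1, integral_const]
  simp

lemma g0_I2 (a : ℝ) (c2 c1 : ℝ) :
    Integrable (fun x : ℝ => c2 * x ^ 2 + (c1 * x + a)) (gaussianReal 0 1) :=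
  ((g0_integrable_pow 2).const_mul c2).add (g0_I1 a c1)

lemma g0_E2 (a : ℝ) (c2 c1 : ℝ) :
    ∫ x, (c2 * x ^ 2 + (c1 * x + a)) ∂(gaussianReal 0 1) = c2 + a := by
  rw [integral_add ((g0_integrable_pow 2).const_mul c2) (g0_I1 a c1),
    integral_const_mul, g0_M2, g0_E1, mul_one]

lemma g0_I3 (a : ℝ) (c3 c2 c1 : ℝ) :
    Integrable (fun x : ℝ => c3 * x ^ 3 + (c2 * x ^ 2 + (c1 * x + a)))
      (gaussianReal 0 1) :=
  ((g0_integrable_pow 3).const_mul c3).add (g0_I2 a c2 c1)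

lemma g0_E3 (a : ℝ) (c3 c2 c1 : ℝ) :
    ∫ x, (c3 * x ^ 3 + (c2 * x ^ 2 + (c1 * x + a))) ∂(gaussianReal 0 1) = c2 + a := by
  rw [integral_add ((g0_integrable_pow 3).const_mul c3) (g0_I2 a c2 c1),
    integral_const_mul, g0_M3, g0_E2, mul_zero, zero_add]

lemma g0_I4 (a : ℝ) (c4 c3 c2 c1 : ℝ) :
    Integrable (fun x : ℝ => c4 * x ^ 4 + (c3 * x ^ 3 + (c2 * x ^ 2 + (c1 * x + a))))
      (gaussianReal 0 1) :=
  ((g0_integrable_pow 4).const_mul c4).add (g0_I3 a c3 c2 c1)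

lemma g0_E4 (a : ℝ) (c4 c3 c2 c1 : ℝ) :
    ∫ x, (c4 * x ^ 4 + (c3 * x ^ 3 + (c2 * x ^ 2 + (c1 * x + a)))) ∂(gaussianReal 0 1)
      = c4 * 3 + c2 + a := by
  rw [integral_add ((g0_integrable_pow 4).const_mul c4) (g0_I3 a c3 c2 c1),
    integral_const_mul, g0_M4, g0_E3]
  ring

lemma g0_integrable_sq_add (a : ℝ) :
    Integrable (fun x : ℝ => (x + a) ^ 2) (gaussianReal 0 1) := by
  have h : (fun x : ℝ => (x + a) ^ 2)
      = fun x => 1 * x ^ 2 + (2 * a * x + a ^ 2) := by funext x; ring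
  rw [h]; exact g0_I2 _ _ _

lemma g0_integrable_pow4_add (a : ℝ) :
    Integrable (fun x : ℝ => ((x + a) ^ 2) ^ 2) (gaussianReal 0 1) := by
  have h : (fun x : ℝ => ((x + a) ^ 2) ^ 2)
      = fun x => 1 * x ^ 4 + (4 * a * x ^ 3 + (6 * a ^ 2 * x ^ 2
        + (4 * a ^ 3 * x + a ^ 4))) := by funext x; ring
  rw [h]; exact g0_I4 _ _ _ _ _

lemma g0_E_sq_add (a : ℝ) :
    ∫ x, (x + a) ^ 2 ∂(gaussianReal 0 1) = 1 + a ^ 2 := by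
  have h : (fun x : ℝ => (x + a) ^ 2)
      = fun x => 1 * x ^ 2 + (2 * a * x + a ^ 2) := by funext x; ring
  rw [h, g0_E2]

lemma g0_E_pow4_add (a : ℝ) :
    ∫ x, ((x + a) ^ 2) ^ 2 ∂(gaussianReal 0 1) = 3 + 6 * a ^ 2 + a ^ 4 := by
  have h : (fun x : ℝ => ((x + a) ^ 2) ^ 2)
      = fun x => 1 * x ^ 4 + (4 * a * x ^ 3 + (6 * a ^ 2 * x ^ 2
        + (4 * a ^ 3 * x + a ^ 4))) := by funext x; ring
  rw [h, g0_E4]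
  try ring
  try norm_num

lemma g0_memLp_sq_add (a : ℝ) :
    MemLp (fun x : ℝ => (x + a) ^ 2) 2 (gaussianReal 0 1) := by
  refine (memLp_two_iff_integrable_sq ?_).2 (g0_integrable_pow4_add a)
  exact ((continuous_pow 2).comp (continuous_id.add continuous_const)).aestronglyMeasurable

end NoncentralScanAux

open NoncentralScanAux

open MeasureTheory ProbabilityTheory

/-- Power of the size-corrected scan statistic at a signal region:
if the signal strength satisfies
`δ/√m ≥ 2√(log(N/m)) + q + K √(2 + 4δ/m)`, then
`P(L - 2√(log(N/m)) > q) ≥ 1 - 1/K²`, where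
`L = (∑ i, (Y i + μ i)² - m)/√m` and `δ = ∑ i, (μ i)²`. -/
theorem noncentral_scan_power
    {Ω : Type*} [MeasurableSpace Ω] (μ : Measure Ω) [IsProbabilityMeasure μ]
    {m N : ℕ} (hm : 1 ≤ m) (hmN : m ≤ N)
    (Y : Fin m → Ω → ℝ) (hmeas : ∀ i, Measurable (Y i))
    (hindep : iIndepFun Y μ)
    (hdist : ∀ i, μ.map (Y i) = gaussianReal 0 1)
    (μv : Fin m → ℝ) (q K : ℝ) (hq : 0 ≤ q) (hK : 0 < K)
    (hsig : 2 * Real.sqrt (Real.log ((N : ℝ) / m)) + q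
          + K * Real.sqrt (2 + 4 * (∑ i, (μv i) ^ 2) / m)
        ≤ (∑ i, (μv i) ^ 2) / Real.sqrt m) :
    ENNReal.ofReal (1 - 1 / K ^ 2)
      ≤ μ {ω | q < ((∑ i, (Y i ω + μv i) ^ 2) - m) / Real.sqrt m
            - 2 * Real.sqrt (Real.log ((N : ℝ) / m))} := by
  classical
  set δ : ℝ := ∑ i, (μv i) ^ 2 with hδdef
  set c : ℝ := 2 * Real.sqrt (Real.log ((N : ℝ) / m)) with hcdef
  have hδ0 : 0 ≤ δ := Finset.sum_nonneg fun i _ => sq_nonneg _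
  have hm0 : (0:ℝ) < m := by exact_mod_cast hm
  have hsm : (0:ℝ) < Real.sqrt m := Real.sqrt_pos.2 hm0
  have hV : (0:ℝ) < 2 * m + 4 * δ := by nlinarith
  set V : ℝ := 2 * m + 4 * δ with hVdef
  set r : ℝ := K * Real.sqrt V with hrdef
  have hsV : 0 < Real.sqrt V := Real.sqrt_pos.2 hV
  have hr : 0 < r := mul_pos hK hsV
  -- key arithmetic bound from hsig
  have hsqrtVm : Real.sqrt m * Real.sqrt (2 + 4 * δ / m) = Real.sqrt V := by
    rw [← Real.sqrt_mul hm0.le]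
    congr 1
    field_simp
    rw [hVdef]; ring
  have key : Real.sqrt m * (c + q) + r ≤ δ := by
    have h1 := mul_le_mul_of_nonneg_right hsig hsm.le
    rw [div_mul_cancel₀ _ hsm.ne'] at h1
    have h2 : (c + q + K * Real.sqrt (2 + 4 * δ / m)) * Real.sqrt m
        = Real.sqrt m * (c + q) + r := by
      rw [hrdef, ← hsqrtVm]; ring
    linarith [h2 ▸ h1]
  -- the summands
  set X : Fin m → Ω → ℝ := fun i ω => (Y i ω + μv i) ^ 2 with hXdef
  have hφmeas : ∀ i : Fin m, Measurable fun x : ℝ => (x + μv i) ^ 2 :=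
    fun i => (measurable_id.add_const _).pow_const 2
  have hφsm : ∀ i : Fin m,
      AEStronglyMeasurable (fun x : ℝ => (x + μv i) ^ 2) (μ.map (Y i)) := fun i =>
    (hφmeas i).aestronglyMeasurable
  have hXmeas : ∀ i, Measurable (X i) := fun i => ((hmeas i).add_const _).pow_const 2
  have hXmem : ∀ i, MemLp (X i) 2 μ := by
    intro i
    have h0 : MemLp (fun x : ℝ => (x + μv i) ^ 2) 2 (μ.map (Y i)) := by
      rw [hdist i]; exact g0_memLp_sq_add (μv i)
    exact (memLp_map_measure_iff (hφsm i) (hmeas i).aemeasurable).1 h0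
  have hEX : ∀ i, μ[X i] = 1 + (μv i) ^ 2 := by
    intro i
    have h := integral_map (hmeas i).aemeasurable (hφsm i)
    rw [hdist i] at h
    rw [show μ[X i] = ∫ x, (x + μv i) ^ 2 ∂(gaussianReal 0 1) from h.symm,
      g0_E_sq_add]
  have hEX2 : ∀ i, ∫ ω, (X i ω) ^ 2 ∂μ = 3 + 6 * (μv i) ^ 2 + (μv i) ^ 4 := by
    intro i
    have hsm2 : AEStronglyMeasurable (fun x : ℝ => ((x + μv i) ^ 2) ^ 2) (μ.map (Y i)) :=
      ((hφmeas i).pow_const 2).aestronglyMeasurable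
    have h := integral_map (hmeas i).aemeasurable hsm2
    rw [hdist i] at h
    rw [show ∫ ω, (X i ω) ^ 2 ∂μ = ∫ x, ((x + μv i) ^ 2) ^ 2 ∂(gaussianReal 0 1) from h.symm,
      g0_E_pow4_add]
  have hVarX : ∀ i, variance (X i) μ = 2 + 4 * (μv i) ^ 2 := by
    intro i
    rw [variance_eq_sub (hXmem i)]
    have h2 : μ[(X i) ^ 2] = ∫ ω, (X i ω) ^ 2 ∂μ := rfl
    rw [h2, hEX2 i, hEX i]
    ring
  -- the sum statistic
  set S : Ω → ℝ := fun ω => ∑ i, X i ω with hSdef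
  have hSpi : S = ∑ i, X i := by funext ω; rw [Finset.sum_apply]
  have hSapp : ∀ ω, S ω = ∑ i, (Y i ω + μv i) ^ 2 := fun ω => rfl
  have hSmeas : Measurable S :=
    Finset.measurable_sum _ fun i _ => hXmeas i
  have hSmem : MemLp S 2 μ := by
    rw [hSpi]; exact memLp_finset_sum' _ fun i _ => hXmem i
  have hES : μ[S] = m + δ := by
    rw [hSdef, integral_finset_sum _ fun i _ => (hXmem i).integrable one_le_two]
    simp_rw [hEX]
    rw [Finset.sum_add_distrib, Finset.sum_const, Finset.card_univ, Fintype.card_fin]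
    simp [hδdef]
  have hindepX : Set.Pairwise ↑(Finset.univ : Finset (Fin m))
      fun i j => IndepFun (X i) (X j) μ := by
    intro i _ j _ hij
    exact (hindep.indepFun hij).comp (hφmeas i) (hφmeas j)
  have hVarS : variance S μ = V := by
    rw [hSpi, IndepFun.variance_sum (fun i _ => hXmem i) hindepX]
    simp_rw [hVarX]
    rw [Finset.sum_add_distrib, Finset.sum_const, Finset.card_univ, Fintype.card_fin]
    simp only [nsmul_eq_mul, hVdef, hδdef]
    rw [← Finset.mul_sum]
    ring
  -- Chebyshev
  have hcheb := meas_ge_le_variance_div_sq (μ := μ) hSmem hr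
  rw [hVarS, hES] at hcheb
  have hquot : V / r ^ 2 = 1 / K ^ 2 := by
    rw [hrdef, mul_pow, Real.sq_sqrt hV.le]
    field_simp
  rw [hquot] at hcheb
  set bad : Set Ω := {ω | r ≤ |S ω - ((m : ℝ) + δ)|} with hbaddef
  have hbadmeas : MeasurableSet bad :=
    measurableSet_le measurable_const ((hSmeas.sub measurable_const).abs)
  have hsub : badᶜ ⊆ {ω | q < ((∑ i, (Y i ω + μv i) ^ 2) - m) / Real.sqrt m - c} := by
    intro ω hω
    have hlt : |S ω - ((m : ℝ) + δ)| < r := not_le.1 hω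
    have hgt : S ω > (m : ℝ) + δ - r := by
      have := (abs_lt.1 hlt).1
      linarith
    have hSω : (q + c) * Real.sqrt m < S ω - m := by
      nlinarith
    have : q + c < (S ω - m) / Real.sqrt m := (lt_div_iff₀ hsm).2 hSω
    have hfin : q < (S ω - m) / Real.sqrt m - c := by linarith
    simpa [Set.mem_setOf_eq, hSapp ω] using hfin
  calc ENNReal.ofReal (1 - 1 / K ^ 2)
      = 1 - ENNReal.ofReal (1 / K ^ 2) := by
        rw [ENNReal.ofReal_sub _ (by positivity), ENNReal.ofReal_one]
    _ ≤ 1 - μ bad := tsub_le_tsub_left hcheb 1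
    _ = μ badᶜ := by
        rw [measure_compl hbadmeas (measure_ne_top μ _), measure_univ]
    _ ≤ _ := measure_mono hsub
end
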